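/- Let T ≥ 1 and let σ_1, ..., σ_T > 0, and define σ > 0 by 1/σ² = Σ_{i=1}^T 1/σ_i². Let ε > 0 and set δ = Φ(−εσ + 1/(2σ)) − e^ε · Φ(−εσ − 1/(2σ)), where Φ is the standard Gaussian CDF. Then for every measurable set S ⊆ (Fin T → ℝ), the product measure ⊗_{i} gaussianReal 0 σ_i² satisfies (⊗_i gaussianReal 0 σ_i²)(S) ≤ e^ε · (⊗_i gaussianReal 1 σ_i²)(S) + δ. -/

import Mathlib

open MeasureTheory ProbabilityTheory

/-- The standard Gaussian cumulative distribution function. -/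
noncomputable def stdGaussianCDF (x : ℝ) : ℝ := (gaussianReal 0 1 (Set.Iic x)).toReal

open Real ENNReal NNReal

lemma gaussianPDFReal_mul_eq (m1 m2 : ℝ) (v1 v2 : ℝ≥0) (h1 : v1 ≠ 0) (h2 : v2 ≠ 0) (z t : ℝ) :
    gaussianPDFReal m1 v1 t * gaussianPDFReal m2 v2 (z - t)
      = gaussianPDFReal (m1 + m2) (v1 + v2) z *
        gaussianPDFReal (m1 + v1 * (z - m1 - m2) / (v1 + v2)) (v1 * v2 / (v1 + v2)) t := by
  have hv1 : (0:ℝ) < v1 := lt_of_le_of_ne v1.coe_nonneg (by exact_mod_cast (Ne.symm h1))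
  have hv2 : (0:ℝ) < v2 := lt_of_le_of_ne v2.coe_nonneg (by exact_mod_cast (Ne.symm h2))
  have hv12 : (0:ℝ) < (v1:ℝ) + v2 := by linarith
  have hw : ((v1 * v2 / (v1 + v2) : ℝ≥0) : ℝ) = (v1:ℝ) * v2 / ((v1:ℝ) + v2) := by push_cast; ring
  have hvv : ((v1 + v2 : ℝ≥0) : ℝ) = (v1:ℝ) + v2 := by push_cast; ring
  simp only [gaussianPDFReal, hw, hvv]
  rw [show ((√(2 * π * v1))⁻¹ * rexp (-(t - m1) ^ 2 / (2 * v1))) *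
      ((√(2 * π * v2))⁻¹ * rexp (-(z - t - m2) ^ 2 / (2 * v2)))
      = ((√(2 * π * v1))⁻¹ * (√(2 * π * v2))⁻¹) *
        (rexp (-(t - m1) ^ 2 / (2 * v1)) * rexp (-(z - t - m2) ^ 2 / (2 * v2))) by ring,
    show ((√(2 * π * ((v1:ℝ) + v2)))⁻¹ * rexp (-(z - (m1 + m2)) ^ 2 / (2 * ((v1:ℝ) + v2)))) *
      ((√(2 * π * ((v1:ℝ) * v2 / ((v1:ℝ) + v2))))⁻¹ *
        rexp (-(t - (m1 + (v1:ℝ) * (z - m1 - m2) / ((v1:ℝ) + v2))) ^ 2 /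
          (2 * ((v1:ℝ) * v2 / ((v1:ℝ) + v2)))))
      = ((√(2 * π * ((v1:ℝ) + v2)))⁻¹ * (√(2 * π * ((v1:ℝ) * v2 / ((v1:ℝ) + v2))))⁻¹) *
        (rexp (-(z - (m1 + m2)) ^ 2 / (2 * ((v1:ℝ) + v2))) *
          rexp (-(t - (m1 + (v1:ℝ) * (z - m1 - m2) / ((v1:ℝ) + v2))) ^ 2 /
          (2 * ((v1:ℝ) * v2 / ((v1:ℝ) + v2))))) by ring,
    ← Real.exp_add, ← Real.exp_add]
  congr 1
  · rw [← mul_inv, ← mul_inv, ← Real.sqrt_mul (by positivity), ← Real.sqrt_mul (by positivity)]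
    congr 1
    field_simp
  · congr 1
    field_simp
    ring

lemma lintegral_gaussianPDF_conv (m1 m2 : ℝ) (v1 v2 : ℝ≥0) (h1 : v1 ≠ 0) (h2 : v2 ≠ 0) (z : ℝ) :
    ∫⁻ t, gaussianPDF m1 v1 t * gaussianPDF m2 v2 (z - t)
      = gaussianPDF (m1 + m2) (v1 + v2) z := by
  have hw : v1 * v2 / (v1 + v2) ≠ 0 := by
    exact pos_iff_ne_zero.mp (div_pos (mul_pos (pos_iff_ne_zero.mpr h1)
      (pos_iff_ne_zero.mpr h2))
      (add_pos_of_pos_of_nonneg (pos_iff_ne_zero.mpr h1) zero_le))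
  simp only [gaussianPDF]
  have : ∀ t : ℝ, ENNReal.ofReal (gaussianPDFReal m1 v1 t) *
      ENNReal.ofReal (gaussianPDFReal m2 v2 (z - t))
      = ENNReal.ofReal (gaussianPDFReal (m1 + m2) (v1 + v2) z) *
        ENNReal.ofReal (gaussianPDFReal (m1 + v1 * (z - m1 - m2) / (v1 + v2))
          (v1 * v2 / (v1 + v2)) t) := by
    intro t
    rw [← ENNReal.ofReal_mul (gaussianPDFReal_nonneg _ _ _),
      ← ENNReal.ofReal_mul (gaussianPDFReal_nonneg _ _ _),
      gaussianPDFReal_mul_eq m1 m2 v1 v2 h1 h2 z t]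
  simp_rw [this]
  rw [lintegral_const_mul _ ((measurable_gaussianPDFReal _ _).ennreal_ofReal),
    lintegral_gaussianPDFReal_eq_one _ hw, mul_one]

lemma gaussianReal_conv (m1 m2 : ℝ) (v1 v2 : ℝ≥0) :
    Measure.map (fun p : ℝ × ℝ => p.1 + p.2) ((gaussianReal m1 v1).prod (gaussianReal m2 v2))
      = gaussianReal (m1 + m2) (v1 + v2) := by
  have hadd : Measurable (fun p : ℝ × ℝ => p.1 + p.2) := measurable_add
  by_cases h1 : v1 = 0
  · subst h1
    rw [gaussianReal_zero_var, Measure.dirac_prod, Measure.map_map hadd measurable_prodMk_left]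
    have : (fun p : ℝ × ℝ => p.1 + p.2) ∘ (Prod.mk m1) = fun x => m1 + x := rfl
    rw [this, gaussianReal_map_const_add, add_comm m2 m1, zero_add]
  by_cases h2 : v2 = 0
  · subst h2
    rw [gaussianReal_zero_var, Measure.prod_dirac, Measure.map_map hadd measurable_prodMk_right]
    have : (fun p : ℝ × ℝ => p.1 + p.2) ∘ (fun x => (x, m2)) = fun x => x + m2 := rfl
    rw [this, gaussianReal_map_add_const, add_zero]
  ext s hs
  rw [Measure.map_apply hadd hs, Measure.prod_apply (hadd hs)]
  have hstep : ∀ x : ℝ, gaussianReal m2 v2 (Prod.mk x ⁻¹' ((fun p : ℝ × ℝ => p.1 + p.2) ⁻¹' s))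
      = ∫⁻ z in s, gaussianPDF m2 v2 (z - x) := by
    intro x
    have hpre : Prod.mk x ⁻¹' ((fun p : ℝ × ℝ => p.1 + p.2) ⁻¹' s) = (fun y => x + y) ⁻¹' s := rfl
    rw [hpre, ← Measure.map_apply (measurable_const_add x) hs, gaussianReal_map_const_add,
      gaussianReal_apply _ h2 s]
    congr 1
    ext z
    rw [gaussianPDF, gaussianPDF, gaussianPDFReal_sub]
  simp_rw [hstep]
  rw [gaussianReal_of_var_ne_zero _ h1,
    lintegral_withDensity_eq_lintegral_mul _ (measurable_gaussianPDF _ _)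
      (Measurable.lintegral_prod_right (f := fun x z => gaussianPDF m2 v2 (z - x))
        ((measurable_gaussianPDF m2 v2).comp (measurable_snd.sub measurable_fst)))]
  simp only [Pi.mul_apply]
  have hin : ∀ a : ℝ, gaussianPDF m1 v1 a * ∫⁻ z in s, gaussianPDF m2 v2 (z - a)
      = ∫⁻ z in s, gaussianPDF m1 v1 a * gaussianPDF m2 v2 (z - a) := fun a =>
    (lintegral_const_mul _ ((measurable_gaussianPDF m2 v2).comp (measurable_id.sub_const a))).symm
  simp_rw [hin]
  rw [lintegral_lintegral_swap
    (((measurable_gaussianPDF m1 v1).comp measurable_fst).mul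
      ((measurable_gaussianPDF m2 v2).comp (measurable_snd.sub measurable_fst))).aemeasurable]
  rw [gaussianReal_apply _ (fun h => h1 (by simpa using (add_eq_zero.mp h).1)) s]
  refine setLIntegral_congr_fun hs (fun z _ => ?_)
  exact lintegral_gaussianPDF_conv m1 m2 v1 v2 h1 h2 z

def sqNN (c : ℝ) : ℝ≥0 := ⟨c ^ 2, sq_nonneg c⟩

lemma map_pi_gaussian_sum (n : ℕ) (m : Fin n → ℝ) (v : Fin n → ℝ≥0) (a : Fin n → ℝ) :
    Measure.map (fun x : Fin n → ℝ => ∑ i, a i * x i)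
      (Measure.pi fun i => gaussianReal (m i) (v i))
      = gaussianReal (∑ i, a i * m i) (∑ i, sqNN (a i) * v i) := by
  induction n with
  | zero =>
      simp only [Finset.univ_eq_empty, Finset.sum_empty]
      rw [Measure.map_const, measure_univ, one_smul, gaussianReal_zero_var]
  | succ n ih =>
      have hsum : Measurable (fun x : Fin (n+1) → ℝ => ∑ i, a i * x i) :=
        Finset.univ.measurable_sum fun i _ => (measurable_pi_apply i).const_mul _
      have hmp := (measurePreserving_piFinSuccAbove
        (fun i : Fin (n+1) => gaussianReal (m i) (v i)) 0).symm
      rw [← hmp.map_eq, Measure.map_map hsum (MeasurableEquiv.measurable _)]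
      have hcomp : (fun x : Fin (n+1) → ℝ => ∑ i, a i * x i) ∘
          ((MeasurableEquiv.piFinSuccAbove (fun _ => ℝ) 0).symm)
          = fun p : ℝ × (Fin n → ℝ) => a 0 * p.1 + ∑ i : Fin n, a i.succ * p.2 i := by
        ext p
        simp only [Function.comp_apply, MeasurableEquiv.piFinSuccAbove_symm_apply,
          Fin.insertNthEquiv, Equiv.coe_fn_mk, Fin.insertNth_zero, Fin.sum_univ_succ,
          Fin.cons_zero, Fin.cons_succ, Fin.zero_succAbove, cast_eq]
      rw [hcomp]
      have htail : Measurable (fun y : Fin n → ℝ => ∑ i : Fin n, a i.succ * y i) :=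
        Finset.univ.measurable_sum fun i _ => (measurable_pi_apply i).const_mul _
      have hdecomp : (fun p : ℝ × (Fin n → ℝ) => a 0 * p.1 + ∑ i : Fin n, a i.succ * p.2 i)
          = (fun q : ℝ × ℝ => q.1 + q.2) ∘
            (Prod.map (fun t => a 0 * t) (fun y => ∑ i : Fin n, a i.succ * y i)) := rfl
      rw [hdecomp, ← Measure.map_map measurable_add
        ((measurable_const_mul _).prodMap htail),
        ← Measure.map_prod_map _ _ (measurable_const_mul _) htail]
      have h0 : Fin.succAbove (0 : Fin (n+1)) = Fin.succ := by
        funext i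
        exact Fin.zero_succAbove i
      rw [show (fun i : Fin n => gaussianReal (m ((0:Fin (n+1)).succAbove i))
            (v ((0:Fin (n+1)).succAbove i)))
          = fun i : Fin n => gaussianReal (m i.succ) (v i.succ) by rw [h0]]
      rw [ih (fun i => m i.succ) (fun i => v i.succ) (fun i => a i.succ),
        gaussianReal_map_const_mul, gaussianReal_conv, Fin.sum_univ_succ (f := fun i => a i * m i),
        Fin.sum_univ_succ (f := fun i => sqNN (a i) * v i)]
      rfl

lemma lintegral_pi_prod {n : ℕ} (μ : Fin n → Measure ℝ) [∀ i, SigmaFinite (μ i)]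
    (f : Fin n → ℝ → ℝ≥0∞) (hf : ∀ i, Measurable (f i)) :
    ∫⁻ x : Fin n → ℝ, ∏ i, f i (x i) ∂Measure.pi μ = ∏ i, ∫⁻ t, f i t ∂μ i := by
  induction n with
  | zero => simp [lintegral_const]
  | succ n ih =>
      have hmp := (measurePreserving_piFinSuccAbove μ 0).symm
      have hF : Measurable (fun x : Fin (n+1) → ℝ => ∏ i, f i (x i)) :=
        Finset.univ.measurable_prod fun i _ => (hf i).comp (measurable_pi_apply i)
      rw [← hmp.lintegral_comp hF]
      have : ∀ p : ℝ × (Fin n → ℝ),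
          (fun x : Fin (n+1) → ℝ => ∏ i, f i (x i))
            ((MeasurableEquiv.piFinSuccAbove (fun _ => ℝ) 0).symm p)
          = f 0 p.1 * ∏ i : Fin n, f i.succ (p.2 i) := by
        intro p
        simp only [MeasurableEquiv.piFinSuccAbove_symm_apply, Fin.insertNthEquiv,
          Equiv.coe_fn_mk, Fin.insertNth_zero, Fin.prod_univ_succ, Fin.cons_zero, Fin.cons_succ,
          Fin.zero_succAbove, cast_eq]
      simp_rw [this]
      rw [lintegral_prod_mul (f := f 0) (g := fun y : Fin n → ℝ => ∏ i : Fin n, f i.succ (y i))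
        ((hf 0).aemeasurable)
        ((Finset.univ.measurable_prod fun i _ =>
          (hf i.succ).comp (measurable_pi_apply i)).aemeasurable)]
      have h0 : Fin.succAbove (0 : Fin (n+1)) = Fin.succ := funext fun i => Fin.zero_succAbove i
      rw [show (fun j : Fin n => μ ((0:Fin (n+1)).succAbove j)) = fun j : Fin n => μ j.succ by
        rw [h0]]
      rw [ih (fun j => μ j.succ) (fun j => f j.succ) (fun j => hf j.succ),
        Fin.prod_univ_succ (f := fun i => ∫⁻ t, f i t ∂μ i)]

lemma pi_gaussian_eq_withDensity (n : ℕ) (m : Fin n → ℝ) (v : Fin n → ℝ≥0)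
    (hv : ∀ i, v i ≠ 0) :
    Measure.pi (fun i => gaussianReal (m i) (v i)) =
      (volume : Measure (Fin n → ℝ)).withDensity
        (fun x => ∏ i, gaussianPDF (m i) (v i) (x i)) := by
  refine (Measure.pi_eq (μ := fun i => gaussianReal (m i) (v i)) fun s hs => ?_)
  rw [withDensity_apply _ (MeasurableSet.univ_pi hs), ← lintegral_indicator
    (MeasurableSet.univ_pi hs)]
  have hind : ∀ x : Fin n → ℝ,
      (Set.pi Set.univ s).indicator (fun x => ∏ i, gaussianPDF (m i) (v i) (x i)) x
        = ∏ i, (s i).indicator (gaussianPDF (m i) (v i)) (x i) := by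
    intro x
    by_cases hx : x ∈ Set.pi Set.univ s
    · rw [Set.indicator_of_mem hx]
      exact Finset.prod_congr rfl fun i _ =>
        (Set.indicator_of_mem (hx i (Set.mem_univ i)) _).symm
    · rw [Set.indicator_of_notMem hx]
      simp only [Set.mem_univ_pi] at hx
      push_neg at hx
      obtain ⟨j, hj⟩ := hx
      exact (Finset.prod_eq_zero (Finset.mem_univ j) (Set.indicator_of_notMem hj _)).symm
  simp_rw [hind]
  rw [volume_pi, lintegral_pi_prod _ _ (fun i => (measurable_gaussianPDF _ _).indicator (hs i))]
  refine Finset.prod_congr rfl fun i _ => ?_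
  rw [lintegral_indicator (hs i), ← gaussianReal_apply _ (hv i)]

lemma gaussianReal_Iic_eq (m : ℝ) (v : ℝ≥0) (hv : v ≠ 0) (c : ℝ) :
    gaussianReal m v (Set.Iic c)
      = ENNReal.ofReal (stdGaussianCDF ((c - m) / Real.sqrt v)) := by
  have hvpos : (0:ℝ) < v := lt_of_le_of_ne v.coe_nonneg (by exact_mod_cast (Ne.symm hv))
  have hsq : (0:ℝ) < Real.sqrt v := Real.sqrt_pos.mpr hvpos
  have h1 : (.mk ((Real.sqrt v)^2) (sq_nonneg _) : ℝ≥0) * 1 = v := by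
    ext
    simp [Real.sq_sqrt (le_of_lt hvpos)]
  have hmap : gaussianReal m v
      = Measure.map (· + m) (Measure.map (Real.sqrt v * ·) (gaussianReal 0 1)) := by
    rw [gaussianReal_map_const_mul, h1, gaussianReal_map_add_const, mul_zero, zero_add]
  rw [hmap, Measure.map_apply (measurable_add_const m) measurableSet_Iic,
    Measure.map_apply (measurable_const_mul _) ((measurable_add_const m) measurableSet_Iic)]
  have hpre : (Real.sqrt v * ·) ⁻¹' ((· + m) ⁻¹' Set.Iic c) = Set.Iic ((c - m) / Real.sqrt v) := by
    ext x
    simp only [Set.mem_preimage, Set.mem_Iic]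
    rw [le_div_iff₀ hsq]
    constructor <;> intro h <;> nlinarith
  rw [hpre, stdGaussianCDF, ENNReal.ofReal_toReal (measure_ne_top _ _)]

lemma gaussianReal_Iio_eq (m : ℝ) (v : ℝ≥0) (hv : v ≠ 0) (c : ℝ) :
    gaussianReal m v (Set.Iio c)
      = ENNReal.ofReal (stdGaussianCDF ((c - m) / Real.sqrt v)) := by
  have h0 : gaussianReal m v {c} = 0 :=
    gaussianReal_absolutelyContinuous m hv (volume_singleton)
  rw [← gaussianReal_Iic_eq m v hv c]
  refine le_antisymm (measure_mono Set.Iio_subset_Iic_self) ?_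
  have hsub : Set.Iic c ⊆ {c} ∪ Set.Iio c := by
    rw [← Set.insert_eq, Set.Iio_insert]
  exact (measure_mono hsub).trans ((measure_union_le _ _).trans (by rw [h0, zero_add]))

lemma gaussianPDFReal_zero_one_rel (v : ℝ≥0) (hv : v ≠ 0) (x : ℝ) :
    gaussianPDFReal 0 v x = Real.exp ((1 - 2 * x) / (2 * v)) * gaussianPDFReal 1 v x := by
  have hvpos : (0:ℝ) < v := lt_of_le_of_ne v.coe_nonneg (by exact_mod_cast (Ne.symm hv))
  simp only [gaussianPDFReal]
  rw [show Real.exp ((1 - 2 * x) / (2 * v)) * ((√(2 * π * v))⁻¹ * rexp (-(x - 1) ^ 2 / (2 * v)))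
    = (√(2 * π * v))⁻¹ * (rexp ((1 - 2 * x) / (2 * v)) * rexp (-(x - 1) ^ 2 / (2 * v))) by ring,
    ← Real.exp_add]
  congr 1
  congr 1
  rw [← add_div]
  congr 1
  ring

/-- composition of Gaussian mechanisms: let `T ≥ 1`, `σ_1, …, σ_T > 0`, and
define `σ > 0` by `1/σ² = Σ_i 1/σ_i²`. For `ε > 0` and
`δ = Φ(−εσ + 1/(2σ)) − e^ε Φ(−εσ − 1/(2σ))`, every measurable `S ⊆ (Fin T → ℝ)` satisfies
`(⊗_i N(0,σ_i²))(S) ≤ e^ε · (⊗_i N(1,σ_i²))(S) + δ`. -/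
theorem gaussian_composition_dp (T : ℕ) (hT : 1 ≤ T) (σs : Fin T → ℝ)
    (hσs : ∀ i, 0 < σs i) (σ : ℝ) (hσ : 0 < σ)
    (hσdef : 1 / σ ^ 2 = ∑ i, 1 / (σs i) ^ 2) (ε : ℝ) (hε : 0 < ε) (δ : ℝ)
    (hδ : δ = stdGaussianCDF (-ε * σ + 1 / (2 * σ)) -
        Real.exp ε * stdGaussianCDF (-ε * σ - 1 / (2 * σ))) :
    ∀ S : Set (Fin T → ℝ), MeasurableSet S →
      Measure.pi (fun i => gaussianReal 0 (Real.toNNReal ((σs i) ^ 2))) S ≤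
        ENNReal.ofReal (Real.exp ε) *
            Measure.pi (fun i => gaussianReal 1 (Real.toNNReal ((σs i) ^ 2))) S +
          ENNReal.ofReal δ := by
  intro S hS
  set v : Fin T → ℝ≥0 := fun i => Real.toNNReal ((σs i) ^ 2) with hvdef
  have hvne : ∀ i, v i ≠ 0 := fun i => (Real.toNNReal_pos.mpr (pow_pos (hσs i) 2)).ne'
  have hvcoe : ∀ i, ((v i : ℝ≥0) : ℝ) = (σs i) ^ 2 := fun i =>
    Real.coe_toNNReal _ (sq_nonneg _)
  set a : Fin T → ℝ := fun i => σ ^ 2 / (σs i) ^ 2 with hadef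
  set g : (Fin T → ℝ) → ℝ := fun x => ∑ i, a i * x i with hgdef
  have hg : Measurable g := Finset.univ.measurable_sum fun i _ =>
    (measurable_pi_apply i).const_mul _
  set P : Measure (Fin T → ℝ) := Measure.pi (fun i => gaussianReal 0 (v i)) with hPdef
  set Q : Measure (Fin T → ℝ) := Measure.pi (fun i => gaussianReal 1 (v i)) with hQdef
  have hσ2ne : Real.toNNReal (σ ^ 2) ≠ 0 := (Real.toNNReal_pos.mpr (by positivity)).ne'
  have hsqrt : Real.sqrt ((Real.toNNReal (σ ^ 2) : ℝ≥0) : ℝ) = σ := by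
    rw [Real.coe_toNNReal _ (sq_nonneg _), Real.sqrt_sq hσ.le]
  have hvar : (∑ i, sqNN (a i) * v i) = Real.toNNReal (σ ^ 2) := by
    apply NNReal.coe_injective
    rw [NNReal.coe_sum, Real.coe_toNNReal _ (sq_nonneg σ)]
    calc ∑ i, ((sqNN (a i) * v i : ℝ≥0) : ℝ) = ∑ i, σ ^ 4 * (1 / (σs i) ^ 2) := by
          refine Finset.sum_congr rfl fun i _ => ?_
          rw [NNReal.coe_mul, hvcoe i, show ((sqNN (a i) : ℝ≥0) : ℝ) = (a i) ^ 2 from rfl,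
            show a i = σ ^ 2 / (σs i) ^ 2 from rfl]
          have := (hσs i).ne'
          field_simp
      _ = σ ^ 4 * (1 / σ ^ 2) := by rw [← Finset.mul_sum, ← hσdef]
      _ = σ ^ 2 := by field_simp
  have h_law_P : Measure.map g P = gaussianReal 0 (Real.toNNReal (σ ^ 2)) := by
    rw [hPdef, hgdef, map_pi_gaussian_sum T (fun _ => 0) v a, hvar]
    congr 1
    simp
  have h_law_Q : Measure.map g Q = gaussianReal 1 (Real.toNNReal (σ ^ 2)) := by
    rw [hQdef, hgdef, map_pi_gaussian_sum T (fun _ => 1) v a, hvar]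
    congr 1
    calc ∑ i, a i * 1 = σ ^ 2 * ∑ i, 1 / (σs i) ^ 2 := by
          rw [Finset.mul_sum]
          refine Finset.sum_congr rfl fun i _ => ?_
          rw [show a i = σ ^ 2 / (σs i) ^ 2 from rfl]
          ring
      _ = 1 := by rw [← hσdef]; field_simp
  -- densities
  set pP : (Fin T → ℝ) → ℝ≥0∞ := fun x => ∏ i, gaussianPDF 0 (v i) (x i) with hpPdef
  set pQ : (Fin T → ℝ) → ℝ≥0∞ := fun x => ∏ i, gaussianPDF 1 (v i) (x i) with hpQdef
  have hpPm : Measurable pP := Finset.univ.measurable_prod fun i _ =>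
    (measurable_gaussianPDF _ _).comp (measurable_pi_apply i)
  have hpQm : Measurable pQ := Finset.univ.measurable_prod fun i _ =>
    (measurable_gaussianPDF _ _).comp (measurable_pi_apply i)
  have hPd : P = (volume : Measure (Fin T → ℝ)).withDensity pP :=
    pi_gaussian_eq_withDensity T (fun _ => 0) v hvne
  have hQd : Q = (volume : Measure (Fin T → ℝ)).withDensity pQ :=
    pi_gaussian_eq_withDensity T (fun _ => 1) v hvne
  -- the privacy-loss level set
  set c : ℝ := 1 / 2 - ε * σ ^ 2 with hcdef
  set A : Set (Fin T → ℝ) := g ⁻¹' (Set.Iio c) with hAdef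
  have hA : MeasurableSet A := hg measurableSet_Iio
  set L : (Fin T → ℝ) → ℝ := fun x => ∑ i, (1 - 2 * x i) / (2 * (σs i) ^ 2) with hLdef
  have hLg : ∀ x, L x = 1 / (2 * σ ^ 2) - g x / σ ^ 2 := by
    intro x
    have h1 : L x = ∑ i, (1 / (2 * (σs i) ^ 2) - a i * x i / σ ^ 2) := by
      refine Finset.sum_congr rfl fun i _ => ?_
      rw [show a i = σ ^ 2 / (σs i) ^ 2 from rfl]
      have := (hσs i).ne'
      field_simp
    rw [h1, Finset.sum_sub_distrib]
    congr 1
    · rw [show (1 : ℝ) / (2 * σ ^ 2) = (1 / 2) * (1 / σ ^ 2) by ring, hσdef, Finset.mul_sum]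
      refine Finset.sum_congr rfl fun i _ => ?_
      ring
    · rw [hgdef, Finset.sum_div]
  -- pointwise density relation
  have hpdfrel : ∀ x : Fin T → ℝ, pP x = ENNReal.ofReal (Real.exp (L x)) * pQ x := by
    intro x
    show (∏ i, gaussianPDF 0 (v i) (x i))
      = ENNReal.ofReal (Real.exp (L x)) * ∏ i, gaussianPDF 1 (v i) (x i)
    have h0 : (∏ i, gaussianPDF 0 (v i) (x i))
        = ENNReal.ofReal (∏ i, gaussianPDFReal 0 (v i) (x i)) :=
      (ENNReal.ofReal_prod_of_nonneg (fun i _ => gaussianPDFReal_nonneg _ _ _)).symm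
    have h1 : (∏ i, gaussianPDF 1 (v i) (x i))
        = ENNReal.ofReal (∏ i, gaussianPDFReal 1 (v i) (x i)) :=
      (ENNReal.ofReal_prod_of_nonneg (fun i _ => gaussianPDFReal_nonneg _ _ _)).symm
    rw [h0, h1, ← ENNReal.ofReal_mul (Real.exp_nonneg _)]
    congr 1
    calc ∏ i, gaussianPDFReal 0 (v i) (x i)
        = ∏ i, (Real.exp ((1 - 2 * x i) / (2 * (σs i) ^ 2)) * gaussianPDFReal 1 (v i) (x i)) := by
          refine Finset.prod_congr rfl fun i _ => ?_
          rw [gaussianPDFReal_zero_one_rel (v i) (hvne i) (x i), hvcoe i]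
      _ = Real.exp (L x) * ∏ i, gaussianPDFReal 1 (v i) (x i) := by
          rw [Finset.prod_mul_distrib, ← Real.exp_sum]
  have hσ2 : (0:ℝ) < σ ^ 2 := by positivity
  -- comparison on A and its complement
  have hcε : 1 / (2 * σ ^ 2) - c / σ ^ 2 = ε := by
    rw [hcdef]; field_simp; ring
  have hL_in : ∀ x ∈ A, ε ≤ L x := by
    intro x hx
    have hgx : g x < c := hx
    rw [hLg x]
    have h2 : g x / σ ^ 2 ≤ c / σ ^ 2 := (div_le_div_iff_of_pos_right hσ2).mpr hgx.le
    linarith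
  have hL_out : ∀ x, x ∉ A → L x ≤ ε := by
    intro x hx
    have hgx : c ≤ g x := not_lt.mp hx
    rw [hLg x]
    have h2 : c / σ ^ 2 ≤ g x / σ ^ 2 := (div_le_div_iff_of_pos_right hσ2).mpr hgx
    linarith
  -- set-level density comparisons
  set E : ℝ≥0∞ := ENNReal.ofReal (Real.exp ε) with hEdef
  have hle : ∀ B : Set (Fin T → ℝ), MeasurableSet B → (∀ x ∈ B, x ∉ A) → P B ≤ E * Q B := by
    intro B hB hBA
    rw [hPd, hQd, withDensity_apply _ hB, withDensity_apply _ hB, ← lintegral_const_mul' _ _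
      ENNReal.ofReal_ne_top]
    refine setLIntegral_mono (hpQm.const_mul E) fun x hx => ?_
    rw [hpdfrel x]
    exact mul_le_mul_left (ENNReal.ofReal_le_ofReal
      (Real.exp_le_exp.mpr (hL_out x (hBA x hx)))) _
  have hge : ∀ B : Set (Fin T → ℝ), MeasurableSet B → B ⊆ A → E * Q B ≤ P B := by
    intro B hB hBA
    rw [hPd, hQd, withDensity_apply _ hB, withDensity_apply _ hB, ← lintegral_const_mul' _ _
      ENNReal.ofReal_ne_top]
    refine setLIntegral_mono hpPm fun x hx => ?_
    rw [hpdfrel x]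
    exact mul_le_mul_left (ENNReal.ofReal_le_ofReal
      (Real.exp_le_exp.mpr (hL_in x (hBA hx)))) _
  -- values of P A and Q A
  set Φ1 : ℝ := stdGaussianCDF (-ε * σ + 1 / (2 * σ)) with hΦ1def
  set Φ2 : ℝ := stdGaussianCDF (-ε * σ - 1 / (2 * σ)) with hΦ2def
  have hΦ1nn : 0 ≤ Φ1 := ENNReal.toReal_nonneg
  have hΦ2nn : 0 ≤ Φ2 := ENNReal.toReal_nonneg
  have hPA : P A = ENNReal.ofReal Φ1 := by
    have h0 : P A = Measure.map g P (Set.Iio c) :=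
      (Measure.map_apply hg measurableSet_Iio).symm
    rw [h0, h_law_P, gaussianReal_Iio_eq _ _ hσ2ne,
      show (c - 0) / Real.sqrt ((Real.toNNReal (σ ^ 2) : ℝ≥0) : ℝ) = -ε * σ + 1 / (2 * σ) by
        rw [hsqrt, hcdef]; field_simp; ring]
  have hQA : Q A = ENNReal.ofReal Φ2 := by
    have h0 : Q A = Measure.map g Q (Set.Iio c) :=
      (Measure.map_apply hg measurableSet_Iio).symm
    rw [h0, h_law_Q, gaussianReal_Iio_eq _ _ hσ2ne,
      show (c - 1) / Real.sqrt ((Real.toNNReal (σ ^ 2) : ℝ≥0) : ℝ) = -ε * σ - 1 / (2 * σ) by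
        rw [hsqrt, hcdef]; field_simp; ring]
  have hEQ : E * Q A = ENNReal.ofReal (Real.exp ε * Φ2) := by
    rw [hQA, hEdef, ← ENNReal.ofReal_mul (Real.exp_nonneg _)]
  have h1 : E * Q A ≤ P A := hge A hA subset_rfl
  have hδ0 : Real.exp ε * Φ2 ≤ Φ1 := by
    rw [hPA, hEQ] at h1
    exact (ENNReal.ofReal_le_ofReal_iff hΦ1nn).mp h1
  have hPAeq : P A = E * Q A + ENNReal.ofReal δ := by
    rw [hPA, hEQ, hδ, ← ENNReal.ofReal_add (mul_nonneg (Real.exp_nonneg _) hΦ2nn) (by linarith)]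
    congr 1
    ring
  -- final assembly
  set D : ℝ≥0∞ := ENNReal.ofReal δ with hDdef
  have hP_split : P S = P (S ∩ A) + P (S \ A) := (measure_inter_add_diff S hA).symm
  have hQ_split : Q (S ∩ A) + Q (S \ A) = Q S := measure_inter_add_diff S hA
  have hA_split : P (A ∩ S) + P (A \ S) = P A := measure_inter_add_diff A hS
  have hQA_split : Q (A ∩ S) + Q (A \ S) = Q A := measure_inter_add_diff A hS
  have h2 : P (S \ A) ≤ E * Q (S \ A) := hle _ (hS.diff hA) (fun x hx => hx.2)
  have h3 : E * Q (A \ S) ≤ P (A \ S) := hge _ (hA.diff hS) (fun x hx => hx.1)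
  have hfin : E * Q (A \ S) ≠ ⊤ := ENNReal.mul_ne_top ENNReal.ofReal_ne_top (measure_ne_top _ _)
  have key : P (S ∩ A) ≤ E * Q (S ∩ A) + D := by
    rw [Set.inter_comm]
    have hchain : P (A ∩ S) + E * Q (A \ S) ≤ (E * Q (A ∩ S) + D) + E * Q (A \ S) := by
      calc P (A ∩ S) + E * Q (A \ S) ≤ P (A ∩ S) + P (A \ S) := add_le_add_right h3 _
        _ = E * Q A + D := by rw [hA_split, hPAeq]
        _ = (E * Q (A ∩ S) + D) + E * Q (A \ S) := by
            rw [← hQA_split, mul_add]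
            ring
    exact (ENNReal.add_le_add_iff_right hfin).mp hchain
  calc P S = P (S ∩ A) + P (S \ A) := hP_split
    _ ≤ (E * Q (S ∩ A) + D) + E * Q (S \ A) := add_le_add key h2
    _ = E * (Q (S ∩ A) + Q (S \ A)) + D := by rw [mul_add]; ring
    _ = E * Q S + D := by rw [hQ_split]
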